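/- Classical comparison of divergence and relative entropy: Let P and Q be probability distributions on Fin n with supp(P) ⊆ supp(Q). Then D(P‖Q) − 1 ≤ S(P‖Q) ≤ D(P‖Q) · (n − 1). -/

import Mathlib

open Matrix BigOperators
open scoped ComplexOrder

noncomputable section

/-- A quantum state: positive semidefinite matrix with unit trace. -/
def IsState {d : Type*} [Fintype d] (ρ : Matrix d d ℂ) : Prop :=
  ρ.PosSemidef ∧ ρ.trace = 1

/-- `SuppLE ρ σ` : the support of `ρ` is contained in the support of `σ`,
expressed as inclusion of kernels the other way. -/
def SuppLE {d : Type*} [Fintype d] (ρ σ : Matrix d d ℂ) : Prop :=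
  ∀ v : d → ℂ, σ *ᵥ v = 0 → ρ *ᵥ v = 0

/-- Matrix logarithm: apply `Real.log` to the eigenvalues (with `log 0 = 0`). -/
noncomputable def matLog {d : Type*} [Fintype d] [DecidableEq d]
    (ρ : Matrix d d ℂ) : Matrix d d ℂ :=
  if h : ρ.IsHermitian then
    (h.eigenvectorUnitary : Matrix d d ℂ) *
      Matrix.diagonal (fun i => (Real.log (h.eigenvalues i) : ℂ)) *
      (star (h.eigenvectorUnitary : Matrix d d ℂ))
  else 0

/-- Quantum relative entropy `S(ρ‖σ) = Re Tr (ρ (log ρ - log σ))`. -/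
noncomputable def relEnt {d : Type*} [Fintype d] [DecidableEq d]
    (ρ σ : Matrix d d ℂ) : ℝ :=
  (Matrix.trace (ρ * (matLog ρ - matLog σ))).re

/-- Trace norm of a Hermitian matrix: sum of absolute values of eigenvalues. -/
noncomputable def traceNorm {d : Type*} [Fintype d] [DecidableEq d]
    (A : Matrix d d ℂ) : ℝ :=
  if h : A.IsHermitian then ∑ i, |h.eigenvalues i| else 0

/-- Rank-one operator `|ψ⟩⟨ψ|`. -/
def ketbra {d : Type*} (ψ : d → ℂ) : Matrix d d ℂ :=
  Matrix.of fun a b => ψ a * (starRingEnd ℂ) (ψ b)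

/-- A POVM element: a positive semidefinite matrix `F` with `1 - F` positive semidefinite. -/
def IsPOVMElem {d : Type*} [Fintype d] [DecidableEq d] (F : Matrix d d ℂ) : Prop :=
  F.PosSemidef ∧ ((1 : Matrix d d ℂ) - F).PosSemidef

/-- `trR F ρ = Re Tr (F ρ)`. -/
noncomputable def trR {d : Type*} [Fintype d] (F ρ : Matrix d d ℂ) : ℝ :=
  (Matrix.trace (F * ρ)).re

/-- Observational divergence `D(ρ‖σ)`. -/
noncomputable def obsDiv {d : Type*} [Fintype d] [DecidableEq d]
    (ρ σ : Matrix d d ℂ) : ℝ :=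
  sSup {x : ℝ | ∃ F : Matrix d d ℂ, IsPOVMElem F ∧ trR F σ ≠ 0 ∧
    x = trR F ρ * Real.logb 2 (trR F ρ / trR F σ)}

/-- A probability distribution on `Fin n`. -/
def IsProbDist {n : ℕ} (P : Fin n → ℝ) : Prop :=
  (∀ i, 0 ≤ P i) ∧ ∑ i, P i = 1

/-- Classical relative entropy (base 2); terms with `P i = 0` contribute `0`. -/
noncomputable def cRelEnt {n : ℕ} (P Q : Fin n → ℝ) : ℝ :=
  ∑ i, P i * Real.logb 2 (P i / Q i)

/-- Classical observational divergence. -/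
noncomputable def cObsDiv {n : ℕ} (P Q : Fin n → ℝ) : ℝ :=
  sSup {x : ℝ | ∃ f : Fin n → ℝ, (∀ i, 0 ≤ f i ∧ f i ≤ 1) ∧
    (∑ i, f i * Q i) ≠ 0 ∧
    x = (∑ i, f i * P i) * Real.logb 2 ((∑ i, f i * P i) / (∑ i, f i * Q i))}


/-- Log-sum inequality (natural log). -/
lemma log_sum_ineq {n : ℕ} (a b : Fin n → ℝ) (ha : ∀ i, 0 ≤ a i) (hb : ∀ i, 0 ≤ b i)
    (hab : ∀ i, b i = 0 → a i = 0) (hB : 0 < ∑ i, b i) :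
    (∑ i, a i) * Real.log ((∑ i, a i) / (∑ i, b i)) ≤ ∑ i, a i * Real.log (a i / b i) := by
  set A := ∑ i, a i with hA
  set B := ∑ i, b i with hBdef
  have hJ := Real.convexOn_mul_log.map_centerMass_le (t := Finset.univ) (w := b)
      (p := fun i => a i / b i) (fun i _ => hb i) hB
      (fun i _ => Set.mem_Ici.mpr (div_nonneg (ha i) (hb i)))
  have h1 : Finset.univ.centerMass b (fun i => a i / b i) = A / B := by
    rw [Finset.centerMass]
    have : ∑ i, b i • (a i / b i) = A := by
      rw [hA]
      refine Finset.sum_congr rfl fun i _ => ?_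
      rcases eq_or_ne (b i) 0 with h | h
      · simp [h, hab i h]
      · rw [smul_eq_mul, mul_div_cancel₀ _ h]
    rw [this, smul_eq_mul, inv_mul_eq_div]
  have h2 : Finset.univ.centerMass b ((fun x : ℝ => x * Real.log x) ∘ fun i => a i / b i)
      = B⁻¹ * ∑ i, a i * Real.log (a i / b i) := by
    rw [Finset.centerMass, smul_eq_mul]
    congr 1
    refine Finset.sum_congr rfl fun i _ => ?_
    rcases eq_or_ne (b i) 0 with h | h
    · simp [h, hab i h]
    · simp only [Function.comp, smul_eq_mul]
      rw [← mul_assoc, mul_div_cancel₀ _ h]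
  rw [h1, h2] at hJ
  have := mul_le_mul_of_nonneg_left hJ hB.le
  calc A * Real.log (A / B) = B * (A / B * Real.log (A / B)) := by
        field_simp
    _ ≤ B * (B⁻¹ * ∑ i, a i * Real.log (a i / b i)) := this
    _ = ∑ i, a i * Real.log (a i / b i) := by
        rw [← mul_assoc, mul_inv_cancel₀ hB.ne', one_mul]

/-- `-(t log t) ≤ log 2` on `[0,1]`. -/
lemma neg_mul_log_le_log_two {t : ℝ} (h0 : 0 ≤ t) (h1 : t ≤ 1) :
    -(t * Real.log t) ≤ Real.log 2 := by
  have hlog2 : (0.6931471803 : ℝ) < Real.log 2 := Real.log_two_gt_d9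
  have he : (2.7182818283 : ℝ) < Real.exp 1 := Real.exp_one_gt_d9
  rcases eq_or_lt_of_le h0 with h | h
  · simp [← h]; linarith
  · have hpos : 0 < Real.exp 1 * t := by positivity
    have := Real.log_le_sub_one_of_pos (inv_pos.mpr hpos)
    rw [Real.log_inv, Real.log_mul (Real.exp_pos 1).ne' h.ne', Real.log_exp] at this
    -- -(1 + log t) ≤ (e t)⁻¹ - 1, so -log t ≤ (e t)⁻¹
    have h2 : -Real.log t ≤ (Real.exp 1 * t)⁻¹ := by linarith
    have h3 : -(t * Real.log t) ≤ t * (Real.exp 1 * t)⁻¹ := by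
      have := mul_le_mul_of_nonneg_left h2 h0
      linarith [this]
    have h4 : t * (Real.exp 1 * t)⁻¹ = (Real.exp 1)⁻¹ := by
      field_simp [mul_comm]
    rw [h4] at h3
    have h5 : (Real.exp 1)⁻¹ ≤ Real.log 2 := by
      rw [inv_le_iff_one_le_mul₀ (Real.exp_pos 1)]
      nlinarith [Real.exp_pos 1]
    linarith

/-- Every element of the observational-divergence set is at most `S + 1`. -/
lemma elem_le_relEnt_add_one {n : ℕ} (P Q : Fin n → ℝ)
    (hP : IsProbDist P) (hQ : IsProbDist Q)
    (hsupp : ∀ i, Q i = 0 → P i = 0) (f : Fin n → ℝ)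
    (hf : ∀ i, 0 ≤ f i ∧ f i ≤ 1) (hq : (∑ i, f i * Q i) ≠ 0) :
    (∑ i, f i * P i) * Real.logb 2 ((∑ i, f i * P i) / (∑ i, f i * Q i))
      ≤ cRelEnt P Q + 1 := by
  obtain ⟨hP0, hP1⟩ := hP
  obtain ⟨hQ0, hQ1⟩ := hQ
  have hlog2 : (0 : ℝ) < Real.log 2 := Real.log_pos (by norm_num)
  set p := ∑ i, f i * P i with hp
  set q := ∑ i, f i * Q i with hqd
  have hp0 : 0 ≤ p := Finset.sum_nonneg fun i _ => mul_nonneg (hf i).1 (hP0 i)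
  have hq0 : 0 < q := lt_of_le_of_ne
    (Finset.sum_nonneg fun i _ => mul_nonneg (hf i).1 (hQ0 i)) (Ne.symm hq)
  have hp1 : p ≤ 1 := by
    rw [hp, ← hP1]
    exact Finset.sum_le_sum fun i _ => by
      nlinarith [(hf i).1, (hf i).2, hP0 i]
  have hq1 : q ≤ 1 := by
    rw [hqd, ← hQ1]
    exact Finset.sum_le_sum fun i _ => by
      nlinarith [(hf i).1, (hf i).2, hQ0 i]
  set S2 := ∑ i, P i * Real.log (P i / Q i) with hS2
  have hRel : cRelEnt P Q = S2 / Real.log 2 := by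
    rw [cRelEnt, hS2, Finset.sum_div]
    exact Finset.sum_congr rfl fun i _ => by rw [Real.logb, mul_div_assoc]
  have hS2nn : 0 ≤ S2 := by
    have := log_sum_ineq P Q hP0 hQ0 hsupp (by rw [hQ1]; norm_num)
    rw [hP1, hQ1] at this
    simpa using this
  -- key: p * log (p/q) ≤ S2 + log 2
  have hkey : p * Real.log (p / q) ≤ S2 + Real.log 2 := by
    rcases eq_or_lt_of_le hq1 with hq1' | hq1'
    · -- q = 1
      have : Real.log (p / q) ≤ 0 := by
        rw [hq1', div_one]
        exact Real.log_nonpos hp0 hp1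
      nlinarith
    · -- 1 - q > 0
      have hs : 0 < 1 - q := by linarith
      -- first application
      have hA : p * Real.log (p / q) ≤ ∑ i, f i * (P i * Real.log (P i / Q i)) := by
        have := log_sum_ineq (fun i => f i * P i) (fun i => f i * Q i)
          (fun i => mul_nonneg (hf i).1 (hP0 i))
          (fun i => mul_nonneg (hf i).1 (hQ0 i))
          (fun i h => by
            beta_reduce at h ⊢
            rcases mul_eq_zero.mp h with h' | h'
            · simp [h']
            · simp [hsupp i h']) (by exact hq0)
        beta_reduce at this
        refine le_trans (le_of_eq rfl) (this.trans (le_of_eq ?_))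
        refine Finset.sum_congr rfl fun i _ => ?_
        rcases eq_or_ne (f i) 0 with h | h
        · simp [h]
        · rw [mul_div_mul_left _ _ h]; ring
      -- second application with 1 - f
      have hB : (1 - p) * Real.log ((1 - p) / (1 - q))
          ≤ ∑ i, (1 - f i) * (P i * Real.log (P i / Q i)) := by
        have hsum1 : ∑ i, (1 - f i) * P i = 1 - p := by
          have h : ∑ i, (1 - f i) * P i = (∑ i, P i) - ∑ i, f i * P i := by
            rw [← Finset.sum_sub_distrib]
            exact Finset.sum_congr rfl fun i _ => by ring
          rw [h, hP1, hp]
        have hsum2 : ∑ i, (1 - f i) * Q i = 1 - q := by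
          have h : ∑ i, (1 - f i) * Q i = (∑ i, Q i) - ∑ i, f i * Q i := by
            rw [← Finset.sum_sub_distrib]
            exact Finset.sum_congr rfl fun i _ => by ring
          rw [h, hQ1, hqd]
        have := log_sum_ineq (fun i => (1 - f i) * P i) (fun i => (1 - f i) * Q i)
          (fun i => mul_nonneg (by linarith [(hf i).2]) (hP0 i))
          (fun i => mul_nonneg (by linarith [(hf i).2]) (hQ0 i))
          (fun i h => by
            beta_reduce at h ⊢
            rcases mul_eq_zero.mp h with h' | h'
            · simp [h']
            · simp [hsupp i h']) (by beta_reduce; rw [hsum2]; exact hs)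
        beta_reduce at this
        rw [hsum1, hsum2] at this
        refine this.trans (le_of_eq ?_)
        refine Finset.sum_congr rfl fun i _ => ?_
        rcases eq_or_ne (1 - f i) 0 with h | h
        · simp [h]
        · rw [mul_div_mul_left _ _ h]; ring
      have hsumS : (∑ i, f i * (P i * Real.log (P i / Q i)))
          + ∑ i, (1 - f i) * (P i * Real.log (P i / Q i)) = S2 := by
        rw [hS2, ← Finset.sum_add_distrib]
        exact Finset.sum_congr rfl fun i _ => by ring
      have hbig : p * Real.log (p / q) + (1 - p) * Real.log ((1 - p) / (1 - q)) ≤ S2 := by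
        rw [← hsumS]; exact add_le_add hA hB
      -- bound -(1-p) log((1-p)/(1-q)) ≤ log 2
      have ht0 : 0 ≤ 1 - p := by linarith
      have hlogdiv : (1 - p) * Real.log ((1 - p) / (1 - q))
          = (1 - p) * Real.log (1 - p) - (1 - p) * Real.log (1 - q) := by
        rcases eq_or_lt_of_le ht0 with h | h
        · rw [← h]; ring_nf
        · rw [Real.log_div h.ne' hs.ne']; ring
      have hbd : -((1 - p) * Real.log ((1 - p) / (1 - q))) ≤ Real.log 2 := by
        rw [hlogdiv]
        have h1 : -((1 - p) * Real.log (1 - p)) ≤ Real.log 2 :=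
          neg_mul_log_le_log_two ht0 (by linarith)
        have h2 : (1 - p) * Real.log (1 - q) ≤ 0 :=
          mul_nonpos_of_nonneg_of_nonpos ht0 (Real.log_nonpos (by linarith) (by linarith))
        linarith
      linarith
  -- convert to logb
  have : p * Real.logb 2 (p / q) = p * Real.log (p / q) / Real.log 2 := by
    rw [Real.logb, mul_div_assoc]
  rw [this, hRel]
  rw [div_add' _ _ _ hlog2.ne']
  exact div_le_div_of_nonneg_right hkey hlog2.le |>.trans (le_of_eq (by ring_nf))

/-- Classical comparison of divergence and relative entropy. -/
theorem classical_div_vs_relEnt {n : ℕ} (P Q : Fin n → ℝ)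
    (hP : IsProbDist P) (hQ : IsProbDist Q)
    (hsupp : ∀ i, Q i = 0 → P i = 0) :
    cObsDiv P Q - 1 ≤ cRelEnt P Q ∧ cRelEnt P Q ≤ cObsDiv P Q * ((n : ℝ) - 1) := by
  obtain ⟨hP0, hP1⟩ := hP
  obtain ⟨hQ0, hQ1⟩ := hQ
  have hn : 1 ≤ n := by
    by_contra h
    push_neg at h
    interval_cases n
    simp at hP1
  set Sset := {x : ℝ | ∃ f : Fin n → ℝ, (∀ i, 0 ≤ f i ∧ f i ≤ 1) ∧
    (∑ i, f i * Q i) ≠ 0 ∧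
    x = (∑ i, f i * P i) * Real.logb 2 ((∑ i, f i * P i) / (∑ i, f i * Q i))} with hSset
  have hObs : cObsDiv P Q = sSup Sset := rfl
  have hmem0 : (0 : ℝ) ∈ Sset := by
    refine ⟨fun _ => 1, fun i => ⟨zero_le_one, le_refl 1⟩, ?_, ?_⟩
    · simpa [hQ1] using one_ne_zero
    · simp [hP1, hQ1]
  have hub : ∀ x ∈ Sset, x ≤ cRelEnt P Q + 1 := by
    rintro x ⟨f, hf, hq, rfl⟩
    exact elem_le_relEnt_add_one P Q ⟨hP0, hP1⟩ ⟨hQ0, hQ1⟩ hsupp f hf hq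
  have hbdd : BddAbove Sset := ⟨cRelEnt P Q + 1, hub⟩
  have hD0 : 0 ≤ cObsDiv P Q := by
    rw [hObs]; exact le_csSup hbdd hmem0
  constructor
  · rw [hObs, sub_le_iff_le_add]
    exact csSup_le ⟨0, hmem0⟩ hub
  · -- upper bound
    have hterm : ∀ i, Q i ≠ 0 → P i * Real.logb 2 (P i / Q i) ≤ cObsDiv P Q := by
      intro i hQi
      rw [hObs]
      refine le_csSup hbdd ?_
      refine ⟨fun j => if j = i then 1 else 0, fun j => by by_cases h : j = i <;> simp [h], ?_, ?_⟩
      · have : ∑ j, (if j = i then (1 : ℝ) else 0) * Q j = Q i := by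
          simp [ite_mul]
        rw [this]; exact hQi
      · have h1 : ∑ j, (if j = i then (1 : ℝ) else 0) * Q j = Q i := by simp [ite_mul]
        have h2 : ∑ j, (if j = i then (1 : ℝ) else 0) * P j = P i := by simp [ite_mul]
        rw [h1, h2]
    set g := fun i => P i * Real.logb 2 (P i / Q i) with hg
    set T := Finset.univ.filter (fun i => 0 < g i) with hT
    have hQpos : ∀ i ∈ T, Q i ≠ 0 := by
      intro i hi
      rw [hT, Finset.mem_filter] at hi
      intro h
      have := hsupp i h
      rw [hg] at hi
      simp [this] at hi
    have hsplit : cRelEnt P Q ≤ ∑ i ∈ T, g i := by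
      have := Finset.sum_filter_add_sum_filter_not Finset.univ (fun i => 0 < g i) g
      have hneg : ∑ i ∈ Finset.univ.filter (fun i => ¬ 0 < g i), g i ≤ 0 :=
        Finset.sum_nonpos fun i hi => by
          rw [Finset.mem_filter] at hi
          exact le_of_not_gt hi.2
      have hRel : cRelEnt P Q = ∑ i, g i := rfl
      rw [hRel, ← this, hT]
      linarith
    have hcard : (T.card : ℝ) ≤ (n : ℝ) - 1 := by
      have hne : ∃ i, i ∉ T := by
        by_contra h
        push_neg at h
        have hlt : ∀ i, Q i < P i := by
          intro i
          have hi := h i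
          rw [hT, Finset.mem_filter] at hi
          have hgi := hi.2
          rw [hg] at hgi
          have hQi : Q i ≠ 0 := fun hz => by simp [hsupp i hz] at hgi
          have hQipos : 0 < Q i := lt_of_le_of_ne (hQ0 i) (Ne.symm hQi)
          by_contra hc
          push_neg at hc
          have : P i / Q i ≤ 1 := (div_le_one hQipos).mpr hc
          have : Real.logb 2 (P i / Q i) ≤ 0 :=
            Real.logb_nonpos (by norm_num) (div_nonneg (hP0 i) (hQ0 i)) this
          nlinarith [hP0 i]
        have hlt' : ∑ i, Q i < ∑ i, P i := by
          refine Finset.sum_lt_sum_of_nonempty ?_ fun i _ => hlt i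
          exact Finset.univ_nonempty_iff.mpr (Fin.pos_iff_nonempty.mp hn)
        rw [hP1, hQ1] at hlt'
        exact lt_irrefl 1 hlt'
      obtain ⟨i, hi⟩ := hne
      have hsub : T ⊆ Finset.univ.erase i := by
        intro j hj
        rw [Finset.mem_erase]
        exact ⟨fun h => hi (h ▸ hj), Finset.mem_univ j⟩
      have := Finset.card_le_card hsub
      rw [Finset.card_erase_of_mem (Finset.mem_univ i), Finset.card_univ,
        Fintype.card_fin] at this
      calc (T.card : ℝ) ≤ ((n - 1 : ℕ) : ℝ) := Nat.cast_le.mpr this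
        _ = (n : ℝ) - 1 := by
            rw [Nat.cast_sub hn, Nat.cast_one]
    calc cRelEnt P Q ≤ ∑ i ∈ T, g i := hsplit
      _ ≤ ∑ _i ∈ T, cObsDiv P Q := Finset.sum_le_sum fun i hi => hterm i (hQpos i hi)
      _ = (T.card : ℝ) * cObsDiv P Q := by rw [Finset.sum_const, nsmul_eq_mul]
      _ ≤ ((n : ℝ) - 1) * cObsDiv P Q := mul_le_mul_of_nonneg_right hcard hD0
      _ = cObsDiv P Q * ((n : ℝ) - 1) := mul_comm _ _

end
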